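/- Let R be a graded radically principal commutative G-graded ring and I any graded ideal of R. Then the quotient ring R/I is graded radically principal. -/

import Mathlib

open DirectSum

variable {G A : Type*} [AddGroup G] [DecidableEq G] [CommRing A]

def gradedRadical (𝒜 : G → AddSubgroup A) [GradedRing 𝒜] (I : Ideal A) : Set A :=
  {x | ∀ g : G, ∃ n : ℕ, ((DirectSum.decompose 𝒜 x g : A)) ^ n ∈ I}

def IsGradedRadicallyPrincipal (𝒜 : G → AddSubgroup A) [GradedRing 𝒜] (I : Ideal A) : Prop :=
  ∃ c : A, SetLike.IsHomogeneousElem 𝒜 c ∧ gradedRadical 𝒜 I = gradedRadical 𝒜 (Ideal.span {c})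

def GradedRadicallyPrincipalRing (𝒜 : G → AddSubgroup A) [GradedRing 𝒜] : Prop :=
  ∀ I : Ideal A, I.IsHomogeneous 𝒜 → IsGradedRadicallyPrincipal 𝒜 I

def IsGradedPrime (𝒜 : G → AddSubgroup A) [GradedRing 𝒜] (P : Ideal A) : Prop :=
  P ≠ ⊤ ∧ P.IsHomogeneous 𝒜 ∧
    ∀ ⦃x y : A⦄, SetLike.IsHomogeneousElem 𝒜 x → SetLike.IsHomogeneousElem 𝒜 y → x * y ∈ P →
      x ∈ P ∨ y ∈ P

lemma aux_decomp_mk (𝒜 : G → AddSubgroup A) [GradedRing 𝒜] (I : Ideal A)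
    (ℬ : G → AddSubgroup (A ⧸ I)) [GradedRing ℬ]
    (hℬ : ∀ g, ℬ g = (𝒜 g).map ((Ideal.Quotient.mk I : A →+* A ⧸ I) : A →+ A ⧸ I))
    (x : A) (g : G) :
    (DirectSum.decompose ℬ (Ideal.Quotient.mk I x) g : A ⧸ I)
      = Ideal.Quotient.mk I (DirectSum.decompose 𝒜 x g) := by
  classical
  have hmem : ∀ i : G, Ideal.Quotient.mk I (DirectSum.decompose 𝒜 x i : A) ∈ ℬ i := by
    intro i
    rw [hℬ]
    exact ⟨_, (DirectSum.decompose 𝒜 x i).2, rfl⟩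
  conv_lhs => rw [← DirectSum.sum_support_decompose 𝒜 x]
  rw [map_sum, DirectSum.decompose_sum]
  rw [DFinsupp.finset_sum_apply, AddSubmonoidClass.coe_finset_sum]
  have : ∀ i ∈ (DirectSum.decompose 𝒜 x).support,
      (DirectSum.decompose ℬ (Ideal.Quotient.mk I (DirectSum.decompose 𝒜 x i : A)) g : A ⧸ I)
        = if i = g then Ideal.Quotient.mk I (DirectSum.decompose 𝒜 x i : A) else 0 := by
    intro i _
    by_cases h : i = g
    · subst h
      simp [DirectSum.decompose_of_mem_same ℬ (hmem i)]
    · simp [h, DirectSum.decompose_of_mem_ne ℬ (hmem i) h]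
  rw [Finset.sum_congr rfl this, Finset.sum_ite_eq']
  by_cases hg : g ∈ (DirectSum.decompose 𝒜 x).support
  · simp [hg]
  · simp only [hg, if_neg, if_false]
    rw [DFinsupp.notMem_support_iff] at hg
    simp [hg]

lemma aux_transfer (𝒜 : G → AddSubgroup A) [GradedRing 𝒜] (I : Ideal A)
    (ℬ : G → AddSubgroup (A ⧸ I)) [GradedRing ℬ]
    (hℬ : ∀ g, ℬ g = (𝒜 g).map ((Ideal.Quotient.mk I : A →+* A ⧸ I) : A →+ A ⧸ I))
    (L : Ideal (A ⧸ I)) (x : A) :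
    Ideal.Quotient.mk I x ∈ gradedRadical ℬ L ↔
      x ∈ gradedRadical 𝒜 (L.comap (Ideal.Quotient.mk I)) := by
  constructor <;> intro h g <;> obtain ⟨n, hn⟩ := h g
  · refine ⟨n, ?_⟩
    rw [aux_decomp_mk 𝒜 I ℬ hℬ, ← map_pow] at hn
    exact hn
  · refine ⟨n, ?_⟩
    rw [aux_decomp_mk 𝒜 I ℬ hℬ, ← map_pow]
    exact hn

theorem stmt_6 (𝒜 : G → AddSubgroup A) [GradedRing 𝒜]
    (hR : GradedRadicallyPrincipalRing 𝒜) (I : Ideal A) (hI : I.IsHomogeneous 𝒜)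
    (ℬ : G → AddSubgroup (A ⧸ I)) [GradedRing ℬ]
    (hℬ : ∀ g, ℬ g = (𝒜 g).map ((Ideal.Quotient.mk I : A →+* A ⧸ I) : A →+ A ⧸ I)) :
    GradedRadicallyPrincipalRing ℬ := by
  intro J hJ
  classical
  set K : Ideal A := J.comap (Ideal.Quotient.mk I) with hK
  have hKhom : K.IsHomogeneous 𝒜 := by
    intro g a ha
    show Ideal.Quotient.mk I ((DirectSum.decompose 𝒜 a g : A)) ∈ J
    rw [← aux_decomp_mk 𝒜 I ℬ hℬ]
    exact hJ g ha
  obtain ⟨c, ⟨g0, hc0⟩, hgr⟩ := hR K hKhom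
  have hcK : c ∈ K.radical := by
    have hc_mem : c ∈ gradedRadical 𝒜 (Ideal.span {c}) := by
      intro g
      by_cases h : g = g0
      · subst h
        refine ⟨1, ?_⟩
        rw [DirectSum.decompose_of_mem_same 𝒜 hc0, pow_one]
        exact Ideal.mem_span_singleton_self c
      · refine ⟨1, ?_⟩
        rw [DirectSum.decompose_of_mem_ne 𝒜 hc0 (Ne.symm h), pow_one]
        exact Ideal.zero_mem _
    rw [← hgr] at hc_mem
    obtain ⟨n, hn⟩ := hc_mem g0
    rw [DirectSum.decompose_of_mem_same 𝒜 hc0] at hn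
    exact ⟨n, hn⟩
  have hIK : I ≤ K := fun a ha => by
    show Ideal.Quotient.mk I a ∈ J
    rw [Ideal.Quotient.eq_zero_iff_mem.mpr ha]
    exact J.zero_mem
  have hsup : Ideal.span {c} ⊔ I ≤ K.radical :=
    sup_le (by rwa [Ideal.span_le, Set.singleton_subset_iff]) (hIK.trans Ideal.le_radical)
  have heq2 : gradedRadical 𝒜 K = gradedRadical 𝒜 (Ideal.span {c} ⊔ I) := by
    apply Set.Subset.antisymm
    · rw [hgr]
      intro x hx g
      obtain ⟨n, hn⟩ := hx g
      exact ⟨n, Ideal.mem_sup_left hn⟩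
    · intro x hx g
      obtain ⟨n, hn⟩ := hx g
      have hrad : (DirectSum.decompose 𝒜 x g : A) ∈ K.radical := by
        have h1 : (DirectSum.decompose 𝒜 x g : A) ∈ (Ideal.span {c} ⊔ I).radical := ⟨n, hn⟩
        have h2 : (Ideal.span {c} ⊔ I).radical ≤ K.radical := by
          rw [← Ideal.radical_idem K]
          exact Ideal.radical_mono hsup
        exact h2 h1
      exact hrad
  have hcomap : (Ideal.span {Ideal.Quotient.mk I c}).comap (Ideal.Quotient.mk I)
      = Ideal.span {c} ⊔ I := by
    rw [← Set.image_singleton, ← Ideal.map_span,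
      Ideal.comap_map_of_surjective _ Ideal.Quotient.mk_surjective,
      ← RingHom.ker_eq_comap_bot, Ideal.mk_ker]
  refine ⟨Ideal.Quotient.mk I c, ⟨g0, by rw [hℬ]; exact ⟨c, hc0, rfl⟩⟩, ?_⟩
  refine Set.ext fun xbar => ?_
  obtain ⟨x, rfl⟩ := Ideal.Quotient.mk_surjective xbar
  show Ideal.Quotient.mk I x ∈ gradedRadical ℬ J ↔
    Ideal.Quotient.mk I x ∈ gradedRadical ℬ (Ideal.span {Ideal.Quotient.mk I c})
  rw [aux_transfer 𝒜 I ℬ hℬ J x, aux_transfer 𝒜 I ℬ hℬ _ x, hcomap, ← hK, heq2]
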